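/- For every n ≥ 1, the paraquaternionic Cayley transform C(q,p) = ((p−1)⁻¹·q, (p−1)⁻¹·(p+1)) is a bijection from the set {(q,p) ∈ (Fin n → pH) × pH : ∑ₐ normSq qₐ + normSq p = 1 and normSq(p−1) ≠ 0} onto the set {(q',p') ∈ (Fin n → pH) × pH : re p' = −∑ₐ normSq q'ₐ and normSq(p'−1) ≠ 0}, with inverse map (q',p') ↦ (2·(p'−1)⁻¹·q', (p'−1)⁻¹·(p'+1)). -/

import Mathlib

open scoped Quaternion

/-- The split quaternions (para-quaternions). -/
local notation "pH" => ℍ[ℝ, 1, 1]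

/-- The norm form `normSq p = p * star p` (a real scalar) of signature (2,2). -/
noncomputable def normSq (p : ℍ[ℝ, 1, 1]) : ℝ := (p * star p).re

/-- The inverse of a split quaternion `a` with `normSq a ≠ 0`:
`a⁻¹ = (normSq a)⁻¹ • star a`, a two-sided inverse. -/
noncomputable def pinv (a : ℍ[ℝ, 1, 1]) : ℍ[ℝ, 1, 1] := (normSq a)⁻¹ • star a

/-- The paraquaternionic Cayley transform `C(q,p) = ((p−1)⁻¹·q, (p−1)⁻¹·(p+1))`. -/
noncomputable def cayley (n : ℕ) (x : (Fin n → ℍ[ℝ, 1, 1]) × ℍ[ℝ, 1, 1]) :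
    (Fin n → ℍ[ℝ, 1, 1]) × ℍ[ℝ, 1, 1] :=
  (fun a => pinv (x.2 - 1) * x.1 a, pinv (x.2 - 1) * (x.2 + 1))

/-- The inverse paraquaternionic Cayley transform
`(q',p') ↦ (2·(p'−1)⁻¹·q', (p'−1)⁻¹·(p'+1))`. -/
noncomputable def cayleyInv (n : ℕ) (y : (Fin n → ℍ[ℝ, 1, 1]) × ℍ[ℝ, 1, 1]) :
    (Fin n → ℍ[ℝ, 1, 1]) × ℍ[ℝ, 1, 1] :=
  (fun a => 2 * pinv (y.2 - 1) * y.1 a, pinv (y.2 - 1) * (y.2 + 1))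

/-- The pseudo-sphere minus the locus `Σ₀` where `normSq (p−1) = 0`. -/
noncomputable def pSphere (n : ℕ) : Set ((Fin n → ℍ[ℝ, 1, 1]) × ℍ[ℝ, 1, 1]) :=
  {x | ∑ a, normSq (x.1 a) + normSq x.2 = 1 ∧ normSq (x.2 - 1) ≠ 0}

/-- The hypersurface `Σ` (a realization of the paraquaternionic Heisenberg group)
minus the locus where `normSq (p'−1) = 0`. -/
noncomputable def SigmaSurf (n : ℕ) : Set ((Fin n → ℍ[ℝ, 1, 1]) × ℍ[ℝ, 1, 1]) :=
  {y | y.2.re = -∑ a, normSq (y.1 a) ∧ normSq (y.2 - 1) ≠ 0}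

open QuaternionAlgebra

lemma normSq_eq (a : pH) : normSq a = a.re^2 - a.imI^2 - a.imJ^2 + a.imK^2 := by
  simp [normSq, re_mul]; ring

lemma normSq_mul (a b : pH) : normSq (a*b) = normSq a * normSq b := by
  simp [normSq_eq, re_mul, imI_mul, imJ_mul, imK_mul]; ring

lemma normSq_star (a : pH) : normSq (star a) = normSq a := by
  simp [normSq_eq]

lemma normSq_smul (r : ℝ) (a : pH) : normSq (r • a) = r^2 * normSq a := by
  simp [normSq_eq, re_smul, imI_smul, imJ_smul, imK_smul, smul_eq_mul]; ring

lemma normSq_coe (r : ℝ) : normSq ((r : ℝ) : pH) = r^2 := by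
  simp [normSq_eq]

lemma two_coe : ((2:ℝ) : pH) = 2 := by
  rw [show ((2:ℝ)) = ((2:ℕ):ℝ) by norm_num, coe_natCast]; norm_num

lemma normSq_two : normSq (2 : pH) = 4 := by
  rw [← two_coe, normSq_coe]; norm_num

lemma star_mul_self' (a : pH) : star a * a = ((normSq a : ℝ) : pH) := by
  have h := mul_star_eq_coe (star a)
  rw [star_star] at h
  rw [h]
  congr 1
  simp [normSq, re_mul]

lemma mul_star_self' (a : pH) : a * star a = ((normSq a : ℝ) : pH) :=
  mul_star_eq_coe a

lemma pinv_mul_cancel {a : pH} (h : normSq a ≠ 0) : pinv a * a = 1 := by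
  rw [pinv, smul_mul_assoc, star_mul_self', smul_coe, inv_mul_cancel₀ h, coe_one]

lemma mul_pinv_cancel {a : pH} (h : normSq a ≠ 0) : a * pinv a = 1 := by
  rw [pinv, mul_smul_comm, mul_star_self', smul_coe, inv_mul_cancel₀ h, coe_one]

lemma normSq_pinv {a : pH} (h : normSq a ≠ 0) : normSq (pinv a) = (normSq a)⁻¹ := by
  rw [pinv, normSq_smul, normSq_star]; field_simp

lemma star_pinv (a : pH) : star (pinv a) = (normSq a)⁻¹ • a := by
  rw [pinv, QuaternionAlgebra.star_smul, star_star]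

lemma two_smul_eq (a : pH) : (2:ℝ) • a = 2 * a := by
  rw [← coe_mul_eq_smul, two_coe]

lemma pinv_smul_star {r : ℝ} {b : pH} (hr : r ≠ 0) (hb : normSq b ≠ 0) :
    pinv (r • star b) = (r * normSq b)⁻¹ • b := by
  rw [pinv, normSq_smul, normSq_star, QuaternionAlgebra.star_smul, star_star, smul_smul]
  congr 1
  field_simp

/-- The second-component map, an involution. -/
noncomputable def T (p : pH) : pH := pinv (p - 1) * (p + 1)

lemma T_sub_one {p : pH} (h : normSq (p-1) ≠ 0) : T p - 1 = pinv (p-1) * 2 := by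
  rw [T, show (2:pH) = (p+1) - (p-1) by rw [add_sub_sub_cancel]; norm_num, mul_sub, pinv_mul_cancel h]

lemma T_sub_one' {p : pH} (h : normSq (p-1) ≠ 0) :
    T p - 1 = (2 * (normSq (p-1))⁻¹) • star (p - 1) := by
  rw [T_sub_one h, pinv, smul_mul_assoc, ← two_coe, mul_coe_eq_smul, smul_smul]
  ring_nf

lemma normSq_T_sub_one {p : pH} (h : normSq (p-1) ≠ 0) :
    normSq (T p - 1) = 4 * (normSq (p-1))⁻¹ := by
  rw [T_sub_one h, normSq_mul, normSq_pinv h, normSq_two]; ring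

lemma normSq_T_sub_one_ne {p : pH} (h : normSq (p-1) ≠ 0) :
    normSq (T p - 1) ≠ 0 := by
  rw [normSq_T_sub_one h]
  simp [h]

lemma pinv_T_sub_one {p : pH} (h : normSq (p-1) ≠ 0) :
    pinv (T p - 1) = (2:ℝ)⁻¹ • (p - 1) := by
  rw [T_sub_one' h, pinv_smul_star (by positivity) h]
  congr 1
  field_simp

lemma T_T {p : pH} (h : normSq (p-1) ≠ 0) : T (T p) = p := by
  have key : (p-1) * (T p + 1) = 2 * p := by
    rw [T, mul_add, mul_one, ← mul_assoc, mul_pinv_cancel h, one_mul]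
    noncomm_ring
  have e : T (T p) = pinv (T p - 1) * (T p + 1) := rfl
  rw [e, pinv_T_sub_one h, smul_mul_assoc, key, ← two_smul_eq, smul_smul]
  norm_num

lemma normSq_add_one (p : pH) : normSq (p + 1) = normSq p + 2 * p.re + 1 := by
  simp [normSq_eq]; ring

lemma normSq_sub_one (p : pH) : normSq (p - 1) = normSq p - 2 * p.re + 1 := by
  simp [normSq_eq]; ring

lemma re_T (p : pH) : (T p).re = (normSq p - 1) * (normSq (p-1))⁻¹ := by
  rw [T, pinv, smul_mul_assoc, re_smul]
  have h : ((star (p-1)) * (p+1)).re = normSq p - 1 := by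
    simp [QuaternionAlgebra.re_mul, normSq_eq]; ring
  rw [h, smul_eq_mul]; ring

lemma normSq_T {p : pH} (h : normSq (p-1) ≠ 0) :
    normSq (T p) = (normSq (p-1))⁻¹ * normSq (p+1) := by
  rw [T, normSq_mul, normSq_pinv h]


/-- The paraquaternionic Cayley transform is a bijection from the punctured
pseudo-sphere onto the punctured hypersurface `Σ`, with inverse the inverse
Cayley transform. -/
theorem cayley_bijOn (n : ℕ) (hn : 1 ≤ n) :
    Set.BijOn (cayley n) (pSphere n) (SigmaSurf n) ∧
    Set.InvOn (cayleyInv n) (cayley n) (pSphere n) (SigmaSurf n) := by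
  have hmapsto : Set.MapsTo (cayley n) (pSphere n) (SigmaSurf n) := by
    rintro ⟨q, p⟩ ⟨heq, hN⟩
    have heq' : ∑ a, normSq (q a) + normSq p = 1 := heq
    have hN' : normSq (p - 1) ≠ 0 := hN
    refine ⟨?_, normSq_T_sub_one_ne hN'⟩
    show (T p).re = -∑ a, normSq (pinv (p-1) * q a)
    rw [re_T]
    have h1 : ∀ a : Fin n, normSq (pinv (p-1) * q a)
        = (normSq (p-1))⁻¹ * normSq (q a) := fun a => by
      rw [normSq_mul, normSq_pinv hN']
    simp only [h1]
    rw [← Finset.mul_sum]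
    have hS : ∑ a, normSq (q a) = 1 - normSq p := by linarith
    rw [hS]; ring
  have hmapsto' : Set.MapsTo (cayleyInv n) (SigmaSurf n) (pSphere n) := by
    rintro ⟨q, p⟩ ⟨hre, hM⟩
    have hre' : p.re = -∑ a, normSq (q a) := hre
    have hM' : normSq (p - 1) ≠ 0 := hM
    refine ⟨?_, normSq_T_sub_one_ne hM'⟩
    show ∑ a, normSq (2 * pinv (p-1) * q a) + normSq (T p) = 1
    have h1 : ∀ a : Fin n, normSq (2 * pinv (p-1) * q a)
        = 4 * (normSq (p-1))⁻¹ * normSq (q a) := fun a => by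
      rw [normSq_mul, normSq_mul, normSq_two, normSq_pinv hM']
    simp only [h1]
    rw [← Finset.mul_sum, normSq_T hM', normSq_add_one]
    set S := ∑ a, normSq (q a) with hSdef
    have hMe : normSq (p - 1) = normSq p + 2 * S + 1 := by
      rw [normSq_sub_one, hre']; ring
    rw [hMe] at hM' ⊢
    rw [hre']
    field_simp
    ring
  have hinv : Set.InvOn (cayleyInv n) (cayley n) (pSphere n) (SigmaSurf n) := by
    constructor
    · rintro ⟨q, p⟩ ⟨-, hN⟩
      have hN' : normSq (p - 1) ≠ 0 := hN
      refine Prod.ext ?_ (T_T hN')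
      funext a
      show 2 * pinv (T p - 1) * (pinv (p-1) * q a) = q a
      have h1 : 2 * pinv (T p - 1) = p - 1 := by
        rw [pinv_T_sub_one hN', mul_smul_comm, ← two_smul_eq, smul_smul]
        norm_num
      rw [h1, ← mul_assoc, mul_pinv_cancel hN', one_mul]
    · rintro ⟨q, p⟩ ⟨-, hM⟩
      have hM' : normSq (p - 1) ≠ 0 := hM
      refine Prod.ext ?_ (T_T hM')
      funext a
      show pinv (T p - 1) * (2 * pinv (p-1) * q a) = q a
      rw [pinv_T_sub_one hM', smul_mul_assoc, ← two_smul_eq, smul_mul_assoc,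
        mul_smul_comm, ← mul_assoc, mul_pinv_cancel hM', one_mul, smul_smul]
      norm_num
  exact ⟨hinv.bijOn hmapsto hmapsto', hinv⟩
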